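/- Fix 0 < V̄ < 1 and α ∈ (0,1). (a) If 0 < α < 1/2 and V̄ ≥ L(α), then the mass polynomial 𝒫_α has exactly two zeros h_l ≤ h_L in (1, ∞) counted with multiplicity, and these satisfy 1 < h_l ≤ ((1/α) − 1)^{1/4} ≤ h_L; moreover h_l = ((1/α) − 1)^{1/4} = h_L if V̄ = L(α), while h_l < ((1/α) − 1)^{1/4} < h_L if V̄ > L(α). (b) If 1/2 ≤ α < 1, or if V̄ < L(α), then 𝒫_α has no zero in (1, ∞). -/
import Mathlib


open Polynomial

/-- The mass polynomial 𝒫_α as a polynomial over ℝ: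
𝒫_α = α X^6 + 3α X^4 − 4V̄ X^3 + 3(1−α) X^2 + (1−α). -/
noncomputable def massP (Vbar α : ℝ) : Polynomial ℝ :=
  C α * X ^ 6 + C (3 * α) * X ^ 4 - C (4 * Vbar) * X ^ 3 + C (3 * (1 - α)) * X ^ 2 + C (1 - α)

/-- The limiting function L(α) = α^{3/4}(1−α)^{1/4} + α^{1/4}(1−α)^{3/4}. -/
noncomputable def Lfun (α : ℝ) : ℝ :=
  α ^ ((3 : ℝ) / 4) * (1 - α) ^ ((1 : ℝ) / 4) + α ^ ((1 : ℝ) / 4) * (1 - α) ^ ((3 : ℝ) / 4)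

lemma eval_massP (V α x : ℝ) : (massP V α).eval x
    = α*x^6 + 3*α*x^4 - 4*V*x^3 + 3*(1-α)*x^2 + (1-α) := by
  simp [massP]

lemma massP_ne (V α : ℝ) (hα : α ≠ 0) : massP V α ≠ 0 := by
  intro h
  have : (massP V α).coeff 6 = α := by
    simp [massP, coeff_add, coeff_sub, coeff_C_mul, coeff_X_pow, coeff_C,
      coeff_one, coeff_mul_X_pow']
  rw [h] at this; simp at this; exact hα this.symm

lemma deriv_massP (V α x : ℝ) : x * (derivative (massP V α)).eval x
    = 3 * (massP V α).eval x + 3*(x^2+1)*(α*x^4 - (1-α)) := by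
  rw [eval_massP]
  simp [massP, derivative_add, derivative_sub]; ring

lemma deriv2_massP (V α x : ℝ) : x^2 * (derivative (derivative (massP V α))).eval x
    = 6 * (massP V α).eval x + 24*α*x^6 + 18*α*x^4 - 12*(1-α)*x^2 - 6*(1-α) := by
  rw [eval_massP]
  simp [massP, derivative_add, derivative_sub]; ring

lemma mono_dec (V α x y : ℝ) (hα : 0 < α) (hx : 0 < x) (hxy : x < y) (hy : α*y^4 ≤ 1-α) :
    (massP V α).eval y * x^3 < (massP V α).eval x * y^3 := by
  have hy0 : 0 < y := hx.trans hxy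
  rw [eval_massP, eval_massP]
  have key : (α*x^6+3*α*x^4-4*V*x^3+3*(1-α)*x^2+(1-α))*y^3
      - (α*y^6+3*α*y^4-4*V*y^3+3*(1-α)*y^2+(1-α))*x^3
      = (y-x)*(((1-α)-α*y^4)*(x^2+x*y+y^2+3*x^2*y^2))
        + α*y^3*(y-x)^2*((1+3*x^2)*y^2+2*x*(1+x^2)*y+x^2*(3+x^2)) := by ring
  have t1 : 0 ≤ (y-x)*(((1-α)-α*y^4)*(x^2+x*y+y^2+3*x^2*y^2)) := by
    apply mul_nonneg (by linarith)
    apply mul_nonneg (by linarith)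
    nlinarith [mul_pos hx hy0, sq_nonneg x, sq_nonneg y, sq_nonneg (x*y)]
  have t2 : 0 < α*y^3*(y-x)^2*((1+3*x^2)*y^2+2*x*(1+x^2)*y+x^2*(3+x^2)) := by
    have hb : 0 < (1+3*x^2)*y^2+2*x*(1+x^2)*y+x^2*(3+x^2) := by
      nlinarith [mul_pos hx hy0, sq_nonneg x, sq_nonneg y, mul_pos (mul_pos hx hx) hx]
    exact mul_pos (mul_pos (mul_pos hα (pow_pos hy0 3)) (pow_pos (by linarith) 2)) hb
  linarith

lemma mono_inc (V α x y : ℝ) (hα : 0 < α) (hx : 0 < x) (hxy : x < y) (hy : 1-α ≤ α*x^4) :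
    (massP V α).eval x * y^3 < (massP V α).eval y * x^3 := by
  have hy0 : 0 < y := hx.trans hxy
  rw [eval_massP, eval_massP]
  have key : (α*y^6+3*α*y^4-4*V*y^3+3*(1-α)*y^2+(1-α))*x^3
      - (α*x^6+3*α*x^4-4*V*x^3+3*(1-α)*x^2+(1-α))*y^3
      = (y-x)*((α*x^4-(1-α))*(x^2+x*y+y^2+3*x^2*y^2))
        + α*x^3*(y-x)^2*((1+3*y^2)*x^2+2*y*(1+y^2)*x+y^2*(3+y^2)) := by ring
  have t1 : 0 ≤ (y-x)*((α*x^4-(1-α))*(x^2+x*y+y^2+3*x^2*y^2)) := by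
    apply mul_nonneg (by linarith)
    apply mul_nonneg (by linarith)
    nlinarith [mul_pos hx hy0, sq_nonneg x, sq_nonneg y, sq_nonneg (x*y)]
  have t2 : 0 < α*x^3*(y-x)^2*((1+3*y^2)*x^2+2*y*(1+y^2)*x+y^2*(3+y^2)) := by
    have hb : 0 < (1+3*y^2)*x^2+2*y*(1+y^2)*x+y^2*(3+y^2) := by
      nlinarith [mul_pos hx hy0, sq_nonneg x, sq_nonneg y, mul_pos (mul_pos hy0 hy0) hy0]
    exact mul_pos (mul_pos (mul_pos hα (pow_pos hx 3)) (pow_pos (by linarith) 2)) hb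
  linarith

lemma Lfun_setup (α : ℝ) (hα0 : 0 < α) (hα1 : α < 1) :
    ∃ a b : ℝ, 0 < a ∧ 0 < b ∧ a^4 = α ∧ b^4 = 1 - α ∧ Lfun α = a^3*b + a*b^3 ∧
      (1 / α - 1) ^ ((1 : ℝ) / 4) = b / a := by
  refine ⟨α ^ ((1:ℝ)/4), (1-α) ^ ((1:ℝ)/4), Real.rpow_pos_of_pos hα0 _,
    Real.rpow_pos_of_pos (by linarith) _, ?_, ?_, ?_, ?_⟩
  · rw [← Real.rpow_natCast (α ^ ((1:ℝ)/4)) 4, ← Real.rpow_mul hα0.le]; try norm_num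
  · rw [← Real.rpow_natCast ((1-α) ^ ((1:ℝ)/4)) 4, ← Real.rpow_mul (by linarith : (0:ℝ) ≤ 1-α)]
    try norm_num
  · have h3a : α ^ ((3:ℝ)/4) = (α ^ ((1:ℝ)/4))^3 := by
      rw [← Real.rpow_natCast (α ^ ((1:ℝ)/4)) 3, ← Real.rpow_mul hα0.le]; try norm_num
    have h3b : (1-α) ^ ((3:ℝ)/4) = ((1-α) ^ ((1:ℝ)/4))^3 := by
      rw [← Real.rpow_natCast ((1-α) ^ ((1:ℝ)/4)) 3,
        ← Real.rpow_mul (by linarith : (0:ℝ) ≤ 1-α)]; try norm_num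
    simp only [Lfun]; rw [h3a, h3b]; try ring
  · rw [show 1/α - 1 = (1-α)/α by field_simp, Real.div_rpow (by linarith) hα0.le]

set_option maxHeartbeats 1000000 in
theorem stmt6 (Vbar α : ℝ) (hV0 : 0 < Vbar) (hV1 : Vbar < 1) (hα : α ∈ Set.Ioo (0 : ℝ) 1) :
    let R := (massP Vbar α).roots.filter (fun x => 1 < x)
    let c : ℝ := (1 / α - 1) ^ ((1 : ℝ) / 4)
    -- (a): for 0 < α < 1/2 and V̄ ≥ L(α), exactly two zeros in (1,∞), with multiplicity
    (α < 1 / 2 → Lfun α ≤ Vbar →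
      ∃ hl hL : ℝ, hl ≤ hL ∧ R = {hl, hL} ∧ 1 < hl ∧ hl ≤ c ∧ c ≤ hL ∧
        (Vbar = Lfun α → hl = c ∧ hL = c) ∧
        (Lfun α < Vbar → hl < c ∧ c < hL)) ∧
    -- (b): for 1/2 ≤ α < 1, or V̄ < L(α), no zero in (1,∞)
    ((1 / 2 ≤ α ∨ Vbar < Lfun α) → ∀ h : ℝ, 1 < h → (massP Vbar α).eval h ≠ 0) := by
  obtain ⟨hα0, hα1⟩ := hα
  intro R c
  have hPne : massP Vbar α ≠ 0 := massP_ne _ _ (ne_of_gt hα0)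
  obtain ⟨a, b, ha, hb, ha4, hb4, hLab, hcab⟩ := Lfun_setup α hα0 hα1
  have hc0 : 0 < c := by rw [show c = b/a from hcab]; exact div_pos hb ha
  have hc4 : α * c^4 = 1 - α := by
    rw [show c = b/a from hcab, div_pow, ← hb4, ← ha4]
    field_simp
  have hLc3 : Lfun α * c^3 = (1-α)*(c^2+1) := by
    rw [hLab, show c = b/a from hcab, ← hb4]
    field_simp; ring
  have hPc : (massP Vbar α).eval c = 4*c^3*(Lfun α - Vbar) := by
    rw [eval_massP]; linear_combination (c^2+3)*hc4 - 4*hLc3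
  constructor
  · -- part (a)
    intro hhalf hLV
    have hc41 : 1 < c^4 := by nlinarith [hc4]
    have hc1 : 1 < c := by
      by_contra hcon
      push_neg at hcon
      have := pow_le_pow_left₀ hc0.le hcon 4
      simp at this; linarith
    rcases eq_or_lt_of_le hLV with hEq | hLt
    · -- V̄ = L(α): double root at c
      have hPc0 : (massP Vbar α).eval c = 0 := by rw [hPc, ← hEq]; ring
      have hd0 : (derivative (massP Vbar α)).eval c = 0 := by
        have h2 := deriv_massP Vbar α c
        have hz : c * (derivative (massP Vbar α)).eval c = 0 := by
          linear_combination h2 + 3*hPc0 + (3*(c^2+1))*hc4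
        exact (mul_eq_zero.mp hz).resolve_left (ne_of_gt hc0)
      have hd2 : (derivative (derivative (massP Vbar α))).eval c ≠ 0 := by
        intro h0
        have h2 := deriv2_massP Vbar α c
        rw [h0, hPc0] at h2
        have h6 : α*c^6 = (1-α)*c^2 := by linear_combination c^2*hc4
        have hcc : 0 < (1-α)*c^2 := mul_pos (by linarith) (pow_pos hc0 2)
        linarith [h2, h6, hc4, hcc]
      have hm2 : rootMultiplicity c (massP Vbar α) = 2 := by
        have hlt : 1 < rootMultiplicity c (massP Vbar α) :=
          (one_lt_rootMultiplicity_iff_isRoot hPne).mpr ⟨hPc0, hd0⟩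
        have hnot : ¬ 2 < rootMultiplicity c (massP Vbar α) := by
          intro hgt
          have := isRoot_iterate_derivative_of_lt_rootMultiplicity hgt
          rw [show derivative^[2] (massP Vbar α) = derivative (derivative (massP Vbar α))
            from rfl] at this
          exact hd2 this
        omega
      have hpos1 : ∀ x : ℝ, 1 < x → x < c → 0 < (massP Vbar α).eval x := by
        intro x hx1 hxc
        have := mono_dec Vbar α x c hα0 (by linarith) hxc (le_of_eq hc4)
        rw [hPc0] at this
        nlinarith [pow_pos hc0 3]
      have hpos2 : ∀ x : ℝ, c < x → 0 < (massP Vbar α).eval x := by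
        intro x hcx
        have := mono_inc Vbar α c x hα0 hc0 hcx (ge_of_eq hc4)
        rw [hPc0] at this
        nlinarith [pow_pos hc0 3]
      refine ⟨c, c, le_refl c, ?_, hc1, le_refl c, le_refl c, fun _ => ⟨rfl, rfl⟩,
        fun hlt => absurd hEq (ne_of_lt hlt)⟩
      show Multiset.filter (fun x => 1 < x) (massP Vbar α).roots = {c, c}
      refine Multiset.ext.mpr fun x => ?_
      rw [Multiset.count_filter]
      by_cases hx1 : (1:ℝ) < x
      · rw [if_pos hx1, count_roots]
        by_cases hxc : x = c
        · subst hxc; rw [hm2]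
          simp [Multiset.count_cons, Multiset.count_singleton]
        · have hne0 : (massP Vbar α).eval x ≠ 0 := by
            rcases lt_or_gt_of_ne hxc with h | h
            · exact ne_of_gt (hpos1 x hx1 h)
            · exact ne_of_gt (hpos2 x h)
          rw [rootMultiplicity_eq_zero hne0]
          simp [Multiset.count_cons, Multiset.count_singleton, hxc]
      · rw [if_neg hx1]
        have hxc : x ≠ c := fun h => hx1 (h ▸ hc1)
        simp [Multiset.count_cons, Multiset.count_singleton, hxc]
    · -- L(α) < V̄ : two simple roots
      have hPcneg : (massP Vbar α).eval c < 0 := by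
        rw [hPc]
        nlinarith [mul_pos (pow_pos hc0 3) (sub_pos.mpr hLt)]
      have hP1 : 0 < (massP Vbar α).eval 1 := by
        rw [eval_massP]; nlinarith
      set M : ℝ := max (c+1) (4*Vbar/α + 1) with hM_def
      have hMc : c < M := lt_of_lt_of_le (by linarith) (le_max_left _ _)
      have hMV : 4*Vbar/α + 1 ≤ M := le_max_right _ _
      have hM1 : 1 ≤ M := by
        have : (0:ℝ) ≤ 4*Vbar/α := by positivity
        linarith
      have hM0 : 0 < M := by linarith
      have hαM : 4*Vbar + α ≤ α*M := by
        have h := mul_le_mul_of_nonneg_left hMV hα0.le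
        have he : α*(4*Vbar/α+1) = 4*Vbar+α := by field_simp
        linarith
      have hM3 : M ≤ M^3 := by
        nlinarith [mul_nonneg (mul_nonneg hM0.le (by linarith : (0:ℝ) ≤ M-1))
          (by linarith : (0:ℝ) ≤ M+1)]
      have hPM : 0 < (massP Vbar α).eval M := by
        rw [eval_massP]
        have hα3 : α*M ≤ α*M^3 := mul_le_mul_of_nonneg_left hM3 hα0.le
        have k1 : 0 ≤ α*M^3 - 4*Vbar - α := by linarith
        have k2 : 0 ≤ M^3 * (α*M^3 - 4*Vbar - α) := mul_nonneg (pow_pos hM0 3).le k1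
        have t1 : 0 < α*M^3 := mul_pos hα0 (pow_pos hM0 3)
        have t2 : 0 < α*M^4 := mul_pos hα0 (pow_pos hM0 4)
        have t3 : 0 ≤ (1-α)*M^2 := mul_nonneg (by linarith) (pow_pos hM0 2).le
        nlinarith [k2, t1, t2, t3]
      have hcont : Continuous fun x : ℝ => (massP Vbar α).eval x := (massP Vbar α).continuous
      obtain ⟨hl, hlmem, hlroot⟩ : ∃ z ∈ Set.Ioo (1:ℝ) c, (massP Vbar α).eval z = 0 := by
        have h0 : (0:ℝ) ∈ Set.Ioo ((massP Vbar α).eval c) ((massP Vbar α).eval 1) :=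
          ⟨hPcneg, hP1⟩
        obtain ⟨z, hz, hz0⟩ := intermediate_value_Ioo' hc1.le hcont.continuousOn h0
        exact ⟨z, hz, hz0⟩
      obtain ⟨hL, hLmem, hLroot⟩ : ∃ z ∈ Set.Ioo c M, (massP Vbar α).eval z = 0 := by
        have h0 : (0:ℝ) ∈ Set.Ioo ((massP Vbar α).eval c) ((massP Vbar α).eval M) :=
          ⟨hPcneg, hPM⟩
        obtain ⟨z, hz, hz0⟩ := intermediate_value_Ioo hMc.le hcont.continuousOn h0
        exact ⟨z, hz, hz0⟩
      have hl1 : 1 < hl := hlmem.1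
      have hlc : hl < c := hlmem.2
      have hcL : c < hL := hLmem.1
      have hlt4 : ∀ x : ℝ, 0 ≤ x → x ≤ c → α*x^4 ≤ 1-α := by
        intro x hx hxc
        rw [← hc4]
        exact mul_le_mul_of_nonneg_left (pow_le_pow_left₀ hx hxc 4) hα0.le
      have hgt4 : ∀ x : ℝ, c ≤ x → 1-α ≤ α*x^4 := by
        intro x hcx
        rw [← hc4]
        exact mul_le_mul_of_nonneg_left (pow_le_pow_left₀ hc0.le hcx 4) hα0.le
      have huniq : ∀ x : ℝ, 1 < x → x ≠ hl → x ≠ hL → (massP Vbar α).eval x ≠ 0 := by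
        intro x hx1 hxl hxL hx0
        rcases lt_trichotomy x c with hxc | hxc | hxc
        · rcases lt_trichotomy x hl with h | h | h
          · have := mono_dec Vbar α x hl hα0 (by linarith) h (hlt4 hl (by linarith) hlc.le)
            rw [hx0, hlroot] at this; simp at this
          · exact hxl h
          · have := mono_dec Vbar α hl x hα0 (by linarith) h (hlt4 x (by linarith) hxc.le)
            rw [hx0, hlroot] at this; simp at this
        · rw [hxc] at hx0; linarith
        · rcases lt_trichotomy x hL with h | h | h
          · have := mono_inc Vbar α x hL hα0 (by linarith) h (hgt4 x hxc.le)
            rw [hx0, hLroot] at this; simp at this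
          · exact hxL h
          · have := mono_inc Vbar α hL x hα0 (by linarith) h (hgt4 hL hcL.le)
            rw [hx0, hLroot] at this; simp at this
      have hmult1 : ∀ z : ℝ, 0 < z → (massP Vbar α).eval z = 0 → α*z^4 ≠ 1-α →
          rootMultiplicity z (massP Vbar α) = 1 := by
        intro z hz hz0 hz4
        have hd : (derivative (massP Vbar α)).eval z ≠ 0 := by
          intro h0
          have h2 := deriv_massP Vbar α z
          rw [h0, hz0] at h2
          have h3 : (3*(z^2+1)) * (α*z^4-(1-α)) = 0 := by linarith
          rcases mul_eq_zero.mp h3 with h | h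
          · nlinarith [sq_nonneg z]
          · exact hz4 (by linarith)
        have hposm : 0 < rootMultiplicity z (massP Vbar α) :=
          (rootMultiplicity_pos hPne).mpr hz0
        have hnot : ¬ 1 < rootMultiplicity z (massP Vbar α) := by
          intro hgt
          exact hd ((one_lt_rootMultiplicity_iff_isRoot hPne).mp hgt).2
        omega
      have hl4 : α*hl^4 ≠ 1-α := by
        rw [← hc4]
        have : hl^4 < c^4 := pow_lt_pow_left₀ hlc (by linarith) (by norm_num)
        have := mul_lt_mul_of_pos_left this hα0
        exact ne_of_lt this
      have hL4 : α*hL^4 ≠ 1-α := by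
        rw [← hc4]
        have : c^4 < hL^4 := pow_lt_pow_left₀ hcL hc0.le (by norm_num)
        have := mul_lt_mul_of_pos_left this hα0
        exact ne_of_gt this
      have hlL : hl ≠ hL := ne_of_lt (by linarith)
      refine ⟨hl, hL, by linarith, ?_, hl1, hlc.le, hcL.le,
        fun hEq' => absurd hEq'.symm (ne_of_lt hLt), fun _ => ⟨hlc, hcL⟩⟩
      show Multiset.filter (fun x => 1 < x) (massP Vbar α).roots = {hl, hL}
      refine Multiset.ext.mpr fun x => ?_
      rw [Multiset.count_filter]
      by_cases hx1 : (1:ℝ) < x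
      · rw [if_pos hx1, count_roots]
        by_cases hxl : x = hl
        · subst hxl
          rw [hmult1 x (by linarith) hlroot hl4]
          simp [Multiset.count_cons, Multiset.count_singleton, hlL]
        · by_cases hxL : x = hL
          · subst hxL
            rw [hmult1 x (by linarith) hLroot hL4]
            simp [Multiset.count_cons, Multiset.count_singleton, hlL.symm]
          · rw [rootMultiplicity_eq_zero (huniq x hx1 hxl hxL)]
            simp [Multiset.count_cons, Multiset.count_singleton, hxl, hxL]
      · rw [if_neg hx1]
        have hxl : x ≠ hl := fun h => hx1 (h ▸ hl1)
        have hxL : x ≠ hL := fun h => hx1 (h ▸ (by linarith : (1:ℝ) < hL))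
        simp [Multiset.count_cons, Multiset.count_singleton, hxl, hxL]
  · -- part (b)
    intro hcase h hh1
    rw [eval_massP]
    rcases hcase with hhalf | hVL
    · have e1 : 0 ≤ (α - 1/2)*((h^2-1)*(h^4+4*h^2+1)) := by
        apply mul_nonneg (by linarith)
        apply mul_nonneg (by nlinarith) (by positivity)
      have e2 : 0 ≤ (h-1)^2*((h^2+1)^2+2*h*(h^2+1)+4*h^2) := by
        apply mul_nonneg (sq_nonneg _)
        nlinarith [sq_nonneg (h^2+1+h), sq_nonneg h]
      have e3 : 0 < 4*h^3*(1-Vbar) := by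
        have h3 : 0 < h^3 := pow_pos (by linarith) 3
        nlinarith
      intro hcon
      nlinarith [e1, e2, e3]
    · rw [hLab] at hVL
      rw [← hb4, ← ha4]
      have k1 : 0 ≤ 2*(a*h-b)^2*(a*h)^2 + (a*h-b)^2*(a*h+b)^2 := by positivity
      have k2 : 0 ≤ h^2*((a*h-b)^2*(a*h+b)^2 + 2*(a*h-b)^2*b^2) := by positivity
      have k3 : 0 < 4*h^3*((a^3*b+a*b^3) - Vbar) := by
        have h3 : 0 < h^3 := pow_pos (by linarith) 3
        nlinarith
      intro hcon
      nlinarith [k1, k2, k3]
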